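/- Let φ ∈ ℂ² with φ ≠ 0 and let A : ℝ³ → ℝ³ be a real linear map. If ∑_{i=1}^{3} e_i·((A e_i)·φ) = 0, then A is symmetric with respect to the Euclidean inner product, i.e. ⟨A X, Y⟩ = ⟨X, A Y⟩ for all X, Y ∈ ℝ³. -/

import Mathlib

/-- Clifford multiplication of a vector `X ∈ ℝ³` on a spinor `φ ∈ ℂ²`, given by
`X · φ = -i (X₁σ₁ + X₂σ₂ + X₃σ₃) φ` where `σ₁, σ₂, σ₃` are the Pauli matrices. -/
noncomputable def cliffordMul (X : EuclideanSpace ℝ (Fin 3)) (φ : EuclideanSpace ℂ (Fin 2)) :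
    EuclideanSpace ℂ (Fin 2) :=
  (WithLp.equiv 2 (Fin 2 → ℂ)).symm
    ![-Complex.I * ((X 2 : ℂ) * φ 0 + ((X 0 : ℂ) - Complex.I * (X 1 : ℂ)) * φ 1),
      -Complex.I * (((X 0 : ℂ) + Complex.I * (X 1 : ℂ)) * φ 0 - (X 2 : ℂ) * φ 1)]

/-- The standard orthonormal basis vector `e_j` of `ℝ³`. -/
noncomputable def stdVec (j : Fin 3) : EuclideanSpace ℝ (Fin 3) :=
  EuclideanSpace.single j 1

set_option maxHeartbeats 4000000 in
theorem dirac_eq_implies_symmetric (φ : EuclideanSpace ℂ (Fin 2)) (hφ : φ ≠ 0)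
    (A : EuclideanSpace ℝ (Fin 3) →ₗ[ℝ] EuclideanSpace ℝ (Fin 3))
    (hD : ∑ i : Fin 3, cliffordMul (stdVec i) (cliffordMul (A (stdVec i)) φ) = 0) :
    ∀ X Y : EuclideanSpace ℝ (Fin 3), (inner ℝ (A X) Y : ℝ) = (inner ℝ X (A Y) : ℝ) := by
  have hsv : ∀ j k : Fin 3, (stdVec j) k = if k = j then 1 else 0 := by
    intro j k; simp [stdVec, EuclideanSpace.single_apply]
  have h0 := congrFun (congrArg (WithLp.equiv 2 (Fin 2 → ℂ)) hD) 0
  have h1 := congrFun (congrArg (WithLp.equiv 2 (Fin 2 → ℂ)) hD) 1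
  simp only [cliffordMul, Fin.sum_univ_three, hsv, Fin.reduceEq, reduceIte] at h0 h1
  norm_num at h0 h1
  set a00 := A (stdVec 0) 0 with ha00
  set a01 := A (stdVec 0) 1 with ha01
  set a02 := A (stdVec 0) 2 with ha02
  set a10 := A (stdVec 1) 0 with ha10
  set a11 := A (stdVec 1) 1 with ha11
  set a12 := A (stdVec 1) 2 with ha12
  set a20 := A (stdVec 2) 0 with ha20
  set a21 := A (stdVec 2) 1 with ha21
  set a22 := A (stdVec 2) 2 with ha22
  have r0 := congrArg Complex.re h0
  have i0 := congrArg Complex.im h0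
  have r1 := congrArg Complex.re h1
  have i1 := congrArg Complex.im h1
  clear h0 h1
  simp only [Complex.add_re, Complex.add_im, Complex.mul_re, Complex.mul_im, Complex.neg_re,
    Complex.neg_im, Complex.sub_re, Complex.sub_im, Complex.I_re, Complex.I_im,
    Complex.ofReal_re, Complex.ofReal_im, Complex.zero_re, Complex.zero_im] at r0 i0 r1 i1
  set t := a00 + a11 + a22 with ht
  set p := a10 - a01 with hp
  set q := a02 - a20 with hq
  set r := a21 - a12 with hr
  set s := t ^ 2 + p ^ 2 + q ^ 2 + r ^ 2 with hs
  have hx0 : s * (φ 0).re = 0 := by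
    rw [hs, ht, hp, hq, hr]
    linear_combination (-(a00 + a11 + a22)) * r0 + (a10 - a01) * i0 +
      (-(a02 - a20)) * r1 + (a21 - a12) * i1
  have hy0 : s * (φ 0).im = 0 := by
    rw [hs, ht, hp, hq, hr]
    linear_combination (-(a10 - a01)) * r0 + (-(a00 + a11 + a22)) * i0 +
      (-(a21 - a12)) * r1 + (-(a02 - a20)) * i1
  have hx1 : s * (φ 1).re = 0 := by
    rw [hs, ht, hp, hq, hr]
    linear_combination (a02 - a20) * r0 + (a21 - a12) * i0 +
      (-(a00 + a11 + a22)) * r1 + (-(a10 - a01)) * i1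
  have hy1 : s * (φ 1).im = 0 := by
    rw [hs, ht, hp, hq, hr]
    linear_combination (-(a21 - a12)) * r0 + (a02 - a20) * i0 +
      (a10 - a01) * r1 + (-(a00 + a11 + a22)) * i1
  have hs0 : s = 0 := by
    by_contra h
    apply hφ
    have e0 : φ 0 = 0 := by
      apply Complex.ext
      · simpa using mul_eq_zero.mp hx0 |>.resolve_left h
      · simpa using mul_eq_zero.mp hy0 |>.resolve_left h
    have e1 : φ 1 = 0 := by
      apply Complex.ext
      · simpa using mul_eq_zero.mp hx1 |>.resolve_left h
      · simpa using mul_eq_zero.mp hy1 |>.resolve_left h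
    ext i
    fin_cases i <;> simpa
  rw [hs] at hs0
  have hp0 : p ^ 2 = 0 :=
    le_antisymm (by linarith [sq_nonneg t, sq_nonneg q, sq_nonneg r]) (sq_nonneg p)
  have hq0 : q ^ 2 = 0 :=
    le_antisymm (by linarith [sq_nonneg t, sq_nonneg p, sq_nonneg r]) (sq_nonneg q)
  have hr0 : r ^ 2 = 0 :=
    le_antisymm (by linarith [sq_nonneg t, sq_nonneg p, sq_nonneg q]) (sq_nonneg r)
  rw [pow_eq_zero_iff (two_ne_zero), hp] at hp0
  rw [pow_eq_zero_iff (two_ne_zero), hq] at hq0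
  rw [pow_eq_zero_iff (two_ne_zero), hr] at hr0
  have h10 : a10 = a01 := by linarith
  have h20 : a20 = a02 := by linarith
  have h21 : a21 = a12 := by linarith
  intro X Y
  have hZ : ∀ Z : EuclideanSpace ℝ (Fin 3),
      A Z = Z 0 • A (stdVec 0) + Z 1 • A (stdVec 1) + Z 2 • A (stdVec 2) := by
    intro Z
    have hz : Z = Z 0 • stdVec 0 + Z 1 • stdVec 1 + Z 2 • stdVec 2 := by
      ext i
      fin_cases i <;> simp [hsv]
    conv_lhs => rw [hz]
    simp [map_add, map_smul]
  rw [hZ X, hZ Y]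
  simp only [PiLp.inner_apply, RCLike.inner_apply, conj_trivial, Fin.sum_univ_three,
    PiLp.add_apply, PiLp.smul_apply, smul_eq_mul, ← ha00, ← ha01, ← ha02, ← ha10, ← ha11,
    ← ha12, ← ha20, ← ha21, ← ha22]
  rw [h10, h20, h21]
  ring
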